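/- If a compact Hausdorff topological space X admits an orbit expansive homeomorphism, then X is metrizable. -/

import Mathlib

open Set

/-- The `n`-th iterate (`n : ℤ`) of a homeomorphism `f`, as a function. -/
def Homeomorph.zpow {X : Type*} [TopologicalSpace X] (f : X ≃ₜ X) (n : ℤ) : X → X :=
  ⇑(f.toEquiv ^ n)

/-- `U = {U 0, …, U (l-1)}` is an o-expansive covering for the homeomorphism `f`:
it is a finite open cover such that any two points whose whole orbits stay
`U`-close must coincide. -/
def IsOExpansiveCover {X : Type*} [TopologicalSpace X] {l : ℕ} (f : X ≃ₜ X)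
    (U : Fin l → Set X) : Prop :=
  (∀ i, IsOpen (U i)) ∧ (⋃ i, U i) = Set.univ ∧
    ∀ x y : X, (∀ n : ℤ, ∃ i, f.zpow n x ∈ U i ∧ f.zpow n y ∈ U i) → x = y

/-- A homeomorphism is orbit expansive if it admits an o-expansive covering. -/
def OrbitExpansive {X : Type*} [TopologicalSpace X] (f : X ≃ₜ X) : Prop :=
  ∃ (l : ℕ) (U : Fin l → Set X), IsOExpansiveCover f U

/-- `U` is an r-expansivity covering for `f`: a finite open cover such that for every
open cover `V` and every sequence `k : ℤ → Fin n` there is `N` with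
`⋂_{|j| ≤ N} f^j(U (k j))` contained in a member of `V`. -/
def IsRExpansiveCover {X : Type*} [TopologicalSpace X] {n : ℕ} (f : X ≃ₜ X)
    (U : Fin n → Set X) : Prop :=
  (∀ i, IsOpen (U i)) ∧ (⋃ i, U i) = Set.univ ∧
    ∀ V : Set (Set X), (∀ v ∈ V, IsOpen v) → ⋃₀ V = Set.univ →
      ∀ k : ℤ → Fin n, ∃ N : ℕ, ∃ v ∈ V,
        (⋂ j ∈ Set.Icc (-(N : ℤ)) (N : ℤ), f.zpow j '' U (k j)) ⊆ v

/-- A homeomorphism is refinement expansive if it admits an r-expansivity covering. -/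
def RefinementExpansive {X : Type*} [TopologicalSpace X] (f : X ≃ₜ X) : Prop :=
  ∃ (n : ℕ) (U : Fin n → Set X), IsRExpansiveCover f U

/-- `U` is a uniform r-expansivity covering for `f`: `N` can be chosen uniformly in the
sequence `k`. -/
def IsUniformRExpansiveCover {X : Type*} [TopologicalSpace X] {n : ℕ} (f : X ≃ₜ X)
    (U : Fin n → Set X) : Prop :=
  (∀ i, IsOpen (U i)) ∧ (⋃ i, U i) = Set.univ ∧
    ∀ V : Set (Set X), (∀ v ∈ V, IsOpen v) → ⋃₀ V = Set.univ →
      ∃ N : ℕ, ∀ k : ℤ → Fin n, ∃ v ∈ V,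
        (⋂ j ∈ Set.Icc (-(N : ℤ)) (N : ℤ), f.zpow j '' U (k j)) ⊆ v

/-- A homeomorphism is uniformly refinement expansive if it admits a uniform
r-expansivity covering. -/
def UniformlyRefinementExpansive {X : Type*} [TopologicalSpace X] (f : X ≃ₜ X) : Prop :=
  ∃ (n : ℕ) (U : Fin n → Set X), IsUniformRExpansiveCover f U


lemma Homeomorph.continuous_zpow {X : Type*} [TopologicalSpace X] (f : X ≃ₜ X) (n : ℤ) :
    Continuous (f.zpow n) := by
  induction n using Int.induction_on with
  | zero => simpa [Homeomorph.zpow] using continuous_id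
  | succ k ih =>
      have h : f.zpow ((k : ℤ) + 1) = f.zpow k ∘ f := by
        funext x
        simp [Homeomorph.zpow, zpow_add_one, Equiv.Perm.mul_apply]
      rw [h]
      exact ih.comp f.continuous
  | pred k ih =>
      have h : f.zpow (-(k : ℤ) - 1) = f.zpow (-k) ∘ f.symm := by
        funext x
        simp [Homeomorph.zpow, zpow_sub_one, Equiv.Perm.mul_apply,
          Equiv.Perm.inv_def]
      rw [h]
      exact ih.comp f.symm.continuous

/-- Theorem 2.7: a compact Hausdorff space admitting an orbit expansive homeomorphism
is metrizable. -/
theorem metrizableSpace_of_orbitExpansive {X : Type*} [TopologicalSpace X]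
    [CompactSpace X] [T2Space X] (f : X ≃ₜ X) (hf : OrbitExpansive f) :
    TopologicalSpace.MetrizableSpace X := by
  obtain ⟨l, U, hUo, hUc, hexp⟩ := hf
  -- partition of unity subordinate to U
  obtain ⟨φ, hφ⟩ := PartitionOfUnity.exists_isSubordinate (s := (univ : Set X))
    isClosed_univ U hUo (by rw [hUc])
  -- the map into a metrizable space
  set F : X → (ℤ → Fin l → ℝ) := fun x n i => φ i (f.zpow n x) with hF
  have hFc : Continuous F := by
    apply continuous_pi; intro n
    apply continuous_pi; intro i
    exact (φ i).continuous.comp (f.continuous_zpow n)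
  have hFinj : Function.Injective F := by
    intro x y hxy
    refine hexp x y fun n => ?_
    obtain ⟨i, hi⟩ := φ.exists_pos (x := f.zpow n x) (mem_univ _)
    have hx : f.zpow n x ∈ U i :=
      hφ i (subset_tsupport _ (by exact ne_of_gt hi))
    have hEq : φ i (f.zpow n y) = φ i (f.zpow n x) := by
      have := congrFun (congrFun hxy n) i
      simpa [hF] using this.symm
    have hy : f.zpow n y ∈ U i := by
      refine hφ i (subset_tsupport _ ?_)
      simp only [Function.mem_support, hEq]; exact ne_of_gt hi
    exact ⟨i, hx, hy⟩
  exact (hFc.isClosedEmbedding hFinj).isEmbedding.metrizableSpace
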